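/- For every integer n ≥ 1, the polynomial B(X) = (Tₙ(2X−1) + 1)/2 ∈ ℚ[X], where Tₙ is the n-th Chebyshev polynomial of the first kind (T₀ = 1, T₁ = X, Tₙ₊₁ = 2X·Tₙ − Tₙ₋₁), is a Belyi polynomial. -/

import Mathlib

open Polynomial

/-- A polynomial `B` over a field `F` is a *Belyi polynomial* if `B 0 ∈ {0,1}`,
`B 1 ∈ {0,1}`, and the derivative `B'` divides `B * (B - 1)`. -/
def IsBelyi {F : Type*} [Field F] (B : F[X]) : Prop :=
  B.eval 0 ∈ ({0, 1} : Set F) ∧ B.eval 1 ∈ ({0, 1} : Set F) ∧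
    B.derivative ∣ B * (B - 1)

open Polynomial.Chebyshev

private lemma pell (m : ℕ) :
    (T ℚ (m : ℤ))^2 - (X^2-1)*(U ℚ ((m : ℤ)-1))^2 = 1 ∧
    (T ℚ ((m : ℤ)+1))^2 - (X^2-1)*(U ℚ (m : ℤ))^2 = 1 ∧
      T ℚ ((m : ℤ)+1) * T ℚ (m : ℤ) - (X^2-1) * U ℚ (m : ℤ) * U ℚ ((m : ℤ)-1) = X := by
  induction m with
  | zero =>
    refine ⟨?_, ?_, ?_⟩ <;> simp [T_one, T_zero, U_zero, U_neg_one]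
  | succ m ih =>
    obtain ⟨h0, h1, h2⟩ := ih
    have hT : T ℚ ((m:ℤ)+2) = 2 * X * T ℚ ((m:ℤ)+1) - T ℚ (m:ℤ) := T_add_two ℚ m
    have hU : U ℚ ((m:ℤ)+1) = 2 * X * U ℚ (m:ℤ) - U ℚ ((m:ℤ)-1) := U_add_one ℚ m
    push_cast
    rw [show ((m:ℤ)+1+1)=(m:ℤ)+2 from by ring, show ((m:ℤ)+1-1)=(m:ℤ) from by ring]
    refine ⟨h1, ?_, ?_⟩
    · linear_combination (T ℚ ((m:ℤ)+2) + 2*X*T ℚ ((m:ℤ)+1) - T ℚ (m:ℤ)) * hT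
        - (X^2-1) * (U ℚ ((m:ℤ)+1) + 2*X*U ℚ (m:ℤ) - U ℚ ((m:ℤ)-1)) * hU
        + 4*X^2*h1 - 4*X*h2 + h0
    · linear_combination (T ℚ ((m:ℤ)+1)) * hT - (X^2-1) * U ℚ (m:ℤ) * hU + 2*X*h1 - h2

lemma evalT (m : ℕ) :
    (T ℚ (m : ℤ)).eval 1 = 1 ∧ (T ℚ (m : ℤ)).eval (-1) = (-1)^m ∧
    (T ℚ ((m : ℤ)+1)).eval 1 = 1 ∧ (T ℚ ((m : ℤ)+1)).eval (-1) = (-1)^(m+1) := by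
  induction m with
  | zero => norm_num [T_zero, T_one]
  | succ m ih =>
    obtain ⟨a1, a2, a3, a4⟩ := ih
    have hT : T ℚ ((m:ℤ)+2) = 2 * X * T ℚ ((m:ℤ)+1) - T ℚ (m:ℤ) := T_add_two ℚ m
    push_cast
    rw [show ((m:ℤ)+1+1)=(m:ℤ)+2 from by ring]
    refine ⟨a3, a4, ?_, ?_⟩ <;> rw [hT] <;> simp [a1, a2, a3, a4] <;> ring

/-- For every `n ≥ 1`, the polynomial `(Tₙ(2X - 1) + 1) / 2`, where `Tₙ` is the `n`-th
Chebyshev polynomial of the first kind, is a Belyi polynomial. -/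
theorem chebyshev_belyi (n : ℕ) (hn : 1 ≤ n) :
    IsBelyi (C (1 / 2 : ℚ) * ((Chebyshev.T ℚ (n : ℤ)).comp (2 * X - 1) + 1)) := by

  obtain ⟨m, rfl⟩ : ∃ m, n = m + 1 := ⟨n - 1, by omega⟩
  obtain ⟨e1, e2, e3, e4⟩ := evalT (m + 1)
  obtain ⟨h0, h1, h2⟩ := pell m
  have hcast : ((m+1 : ℕ) : ℤ) = (m:ℤ)+1 := by push_cast; ring
  rw [hcast]
  set A := (T ℚ ((m:ℤ)+1)).comp (2 * X - 1) with hA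
  set V := (U ℚ ((m:ℤ))).comp (2 * X - 1) with hV
  have heA1 : A.eval 1 = 1 := by
    rw [hA, eval_comp]; norm_num
  have heA0 : A.eval 0 = (-1)^(m+1) := by
    rw [hA, eval_comp]; norm_num; rw [hcast] at e2; rw [← e2]; norm_num
  refine ⟨?_, ?_, ?_⟩
  · rcases Nat.even_or_odd (m+1) with he | ho
    · right
      simp [heA0, he.neg_one_pow]
      norm_num
    · left
      simp [heA0, ho.neg_one_pow]
  · right
    simp [heA1]
    norm_num
  · -- derivative
    have hhalf : 2 * Polynomial.C (1/2 : ℚ) = 1 := by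
      rw [show ((2:ℚ[X])) = Polynomial.C (2:ℚ) from (map_ofNat Polynomial.C 2).symm, ← Polynomial.C_mul]
      norm_num
    have hne : ((m:ℚ)+1) ≠ 0 := by positivity
    have hD : derivative (C (1/2 : ℚ) * (A + 1)) = C ((m:ℚ)+1) * V := by
      rw [hA, hV]
      rw [derivative_C_mul, derivative_add, derivative_one, derivative_comp,
        T_derivative_eq_U]
      rw [show ((m:ℤ)+1-1) = (m:ℤ) from by ring]
      push_cast
      simp only [mul_comp, intCast_comp, derivative_sub, derivative_mul, derivative_X,
        derivative_ofNat, derivative_one]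
      push_cast
      simp only [map_add, map_one, map_natCast, natCast_comp, add_comp, one_comp]
      linear_combination ((m:ℚ[X])+1)*(U ℚ (m:ℤ)).comp (2*X-1)*hhalf
    have hC : C ((m:ℚ)+1) * C (((m:ℚ)+1)⁻¹) = 1 := by
      rw [← Polynomial.C_mul, mul_inv_cancel₀ hne, C_1]
    have hc : A^2 - ((2*X-1)^2 - 1) * V^2 = 1 := by
      have := congrArg (fun p : ℚ[X] => p.comp (2*X-1)) h1
      simpa only [sub_comp, mul_comp, pow_comp, one_comp, X_comp] using this
    refine ⟨C (((m:ℚ)+1)⁻¹) * (X^2 - X) * V, ?_⟩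
    rw [hD]
    linear_combination C (1/2:ℚ)*(A+1)*hhalf + C (1/2:ℚ)^2 * hc - (X^2-X)*V^2*hC + (X^2-X)*V^2*(2*C (1/2:ℚ)+1)*hhalf
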